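/- For integers m ≥ t ≥ 1, the binomial coefficient C(2m+1, m+t+1) equals the sum over γ from 0 to m−t of C(m, γ) · C(m−γ, ⌊(m−γ−t)/2⌋) · 2^γ. -/
import Mathlib

open Polynomial Finset

private lemma coeff_one_add_X_sq_pow (n j : ℕ) :
    ((1 + X ^ 2 : ℕ[X]) ^ n).coeff j = if 2 ∣ j then n.choose (j / 2) else 0 := by
  have h : ((1 : ℕ[X]) + X ^ 2) ^ n = Polynomial.expand ℕ 2 ((1 + X) ^ n) := by
    rw [map_pow, map_add, map_one, Polynomial.expand_X]
  rw [h, Polynomial.coeff_expand (by norm_num)]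
  split <;> simp [Polynomial.coeff_one_add_X_pow]

private lemma term_coeff (c k s : ℕ) (Q : ℕ[X]) (h : k ≤ s) :
    ((2 * X : ℕ[X]) ^ k * Q * (c : ℕ[X])).coeff s = 2 ^ k * Q.coeff (s - k) * c := by
  have h1 : ((2 * X : ℕ[X]) ^ k * Q * (c : ℕ[X])) = ((2 ^ k * c : ℕ)) • (X ^ k * Q) := by
    rw [nsmul_eq_mul]
    push_cast
    ring
  rw [h1, Polynomial.coeff_smul]
  obtain ⟨d, rfl⟩ : ∃ d, s = d + k := ⟨s - k, by omega⟩
  rw [Polynomial.coeff_X_pow_mul, Nat.add_sub_cancel, smul_eq_mul]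
  ring

/-- For integers `m ≥ t ≥ 1`, `C(2m+1, m+t+1) = Σ_{γ=0}^{m-t} C(m,γ)·C(m-γ, ⌊(m-γ-t)/2⌋)·2^γ`. -/
theorem binomial_identity (m t : ℕ) (ht : 1 ≤ t) (htm : t ≤ m) :
    Nat.choose (2 * m + 1) (m + t + 1) =
      ∑ γ ∈ Finset.range (m - t + 1),
        Nat.choose m γ * Nat.choose (m - γ) ((m - γ - t) / 2) * 2 ^ γ := by
  -- polynomial identity
  have key : ((1 : ℕ[X]) + X) ^ (2 * m + 1) =
      (1 + X) * ∑ γ ∈ range (m + 1),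
        (2 * X) ^ γ * (1 + X ^ 2) ^ (m - γ) * ((m.choose γ : ℕ) : ℕ[X]) := by
    rw [← add_pow]
    have h2 : ((2 * X) + (1 + X ^ 2) : ℕ[X]) = (1 + X) ^ 2 := by ring
    rw [h2, ← pow_mul]
    ring
  -- take coefficient (m + t + 1) of both sides
  have hL := congrArg (fun p => Polynomial.coeff p (m + t + 1)) key
  simp only [Polynomial.coeff_one_add_X_pow] at hL
  rw [add_mul, one_mul, Polynomial.coeff_add] at hL
  have hx : (X * ∑ γ ∈ range (m + 1),
      (2 * X) ^ γ * (1 + X ^ 2) ^ (m - γ) * ((m.choose γ : ℕ) : ℕ[X])).coeff (m + t + 1) =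
      (∑ γ ∈ range (m + 1),
      (2 * X) ^ γ * (1 + X ^ 2) ^ (m - γ) * ((m.choose γ : ℕ) : ℕ[X])).coeff (m + t) := by
    exact Polynomial.coeff_X_mul _ (m + t)
  rw [hx, Polynomial.finset_sum_coeff, Polynomial.finset_sum_coeff, ← Finset.sum_add_distrib] at hL
  -- compute each term
  have hterm : ∀ γ ∈ range (m + 1),
      ((2 * X : ℕ[X]) ^ γ * (1 + X ^ 2) ^ (m - γ) * ((m.choose γ : ℕ) : ℕ[X])).coeff (m + t + 1) +
      ((2 * X : ℕ[X]) ^ γ * (1 + X ^ 2) ^ (m - γ) * ((m.choose γ : ℕ) : ℕ[X])).coeff (m + t) =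
      (if γ ≤ m - t then
        m.choose γ * Nat.choose (m - γ) ((m - γ - t) / 2) * 2 ^ γ else 0) := by
    intro γ hγ
    rw [Finset.mem_range] at hγ
    have hγm : γ ≤ m := by omega
    rw [term_coeff _ _ _ _ (by omega), term_coeff _ _ _ _ (by omega),
      coeff_one_add_X_sq_pow, coeff_one_add_X_sq_pow]
    by_cases hle : γ ≤ m - t
    · rw [if_pos hle]
      by_cases hpar : 2 ∣ (m + t - γ)
      · have hodd : ¬ (2 ∣ (m + t + 1 - γ)) := by omega
        rw [if_pos hpar, if_neg hodd]
        have he : (m + t - γ) / 2 = (m - γ) - (m - γ - t) / 2 := by omega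
        have hk : (m - γ - t) / 2 ≤ m - γ := by omega
        rw [he, Nat.choose_symm hk]
        ring
      · have heven : 2 ∣ (m + t + 1 - γ) := by omega
        rw [if_pos heven, if_neg hpar]
        have he : (m + t + 1 - γ) / 2 = (m - γ) - (m - γ - t) / 2 := by omega
        have hk : (m - γ - t) / 2 ≤ m - γ := by omega
        rw [he, Nat.choose_symm hk]
        ring
    · rw [if_neg hle]
      have h1 : (if 2 ∣ (m + t + 1 - γ) then (m - γ).choose ((m + t + 1 - γ) / 2) else 0) = 0 := by
        split
        · exact Nat.choose_eq_zero_of_lt (by omega)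
        · rfl
      have h2 : (if 2 ∣ (m + t - γ) then (m - γ).choose ((m + t - γ) / 2) else 0) = 0 := by
        split
        · exact Nat.choose_eq_zero_of_lt (by omega)
        · rfl
      rw [h1, h2]
      ring
  rw [Finset.sum_congr rfl hterm, Nat.cast_id] at hL
  rw [hL, ← Finset.sum_subset (Finset.range_subset_range.mpr (show m - t + 1 ≤ m + 1 by omega))
    (fun x _ hx => by rw [Finset.mem_range] at hx; rw [if_neg (by omega)])]
  exact Finset.sum_congr rfl fun x hx => by
    rw [Finset.mem_range] at hx; rw [if_pos (by omega)]
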